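/- Let I and J be squarefree monomial ideals in a polynomial ring K[x_1,...,x_n], and let g_1, ..., g_r ∈ I and h ∈ J be squarefree monomials. Then lcm(g_1 g_2 ⋯ g_r, h^r) = ∏_{i=1}^r lcm(g_i, h). Consequently, I^r ∩ J^{[r]} ⊆ (I ∩ J)^r, where J^{[r]} denotes the ideal generated by the r-th powers of the monomial generators of J. -/
import Mathlib

open MvPolynomial

lemma prod_monomial_one {K : Type*} [Field K] {n : ℕ} {ι : Type*} (s : Finset ι)
    (e : ι → (Fin n →₀ ℕ)) :
    ∏ i ∈ s, monomial (e i) (1 : K) = monomial (∑ i ∈ s, e i) 1 := by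
  induction s using Finset.cons_induction with
  | empty => simp [monomial_zero']
  | cons a s ha ih => rw [Finset.prod_cons, Finset.sum_cons, ih, monomial_mul, one_mul]

/-- For squarefree monomials `g₁,…,g_r ∈ I` and `h ∈ J` (recorded by exponent vectors),
`lcm(g₁⋯g_r, h^r) = ∏ lcm(gᵢ, h)`; consequently `I^r ∩ J^{[r]} ⊆ (I ∩ J)^r` for
squarefree monomial ideals `I` and `J`. -/
theorem stmt3 {K : Type*} [Field K] {n : ℕ} (r : ℕ) (hr : 0 < r)
    (SI SJ : Set (Fin n →₀ ℕ))
    (hSI : ∀ a ∈ SI, ∀ i, a i ≤ 1) (hSJ : ∀ b ∈ SJ, ∀ i, b i ≤ 1) :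
    (∀ (g : Fin r → (Fin n →₀ ℕ)) (h : Fin n →₀ ℕ),
      (∀ i j, g i j ≤ 1) → (∀ j, h j ≤ 1) →
      (∑ i, g i) ⊔ (r • h) = ∑ i, (g i ⊔ h)) ∧
    Ideal.span ((fun d => MvPolynomial.monomial d (1 : K)) '' SI) ^ r ⊓
        Ideal.span ((fun d => MvPolynomial.monomial (r • d) (1 : K)) '' SJ) ≤
      (Ideal.span ((fun d => MvPolynomial.monomial d (1 : K)) '' SI) ⊓
        Ideal.span ((fun d => MvPolynomial.monomial d (1 : K)) '' SJ)) ^ r := by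
  classical
  have key : ∀ (g : Fin r → (Fin n →₀ ℕ)) (h : Fin n →₀ ℕ),
      (∀ i j, g i j ≤ 1) → (∀ j, h j ≤ 1) →
      (∑ i, g i) ⊔ (r • h) = ∑ i, (g i ⊔ h) := by
    intro g h hg hh
    ext j
    rw [Finsupp.sup_apply, Finsupp.finset_sum_apply, Finsupp.smul_apply,
      Finsupp.finset_sum_apply]
    simp only [Finsupp.sup_apply]
    have hs : ∑ i, (g i) j ≤ r := by
      calc ∑ i, (g i) j ≤ ∑ _i : Fin r, 1 := Finset.sum_le_sum (fun i _ => hg i j)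
      _ = r := by simp
    rcases Nat.le_one_iff_eq_zero_or_eq_one.mp (hh j) with h0 | h1
    · simp [h0]
    · rw [h1]
      have h2 : ∀ i ∈ Finset.univ, (g i) j ⊔ 1 = 1 := fun i _ => by
        have := hg i j; omega
      rw [Finset.sum_congr rfl h2, Finset.sum_const, Finset.card_univ, Fintype.card_fin]
      simp only [smul_eq_mul, mul_one]
      exact sup_eq_right.mpr hs
  refine ⟨key, ?_⟩
  set M : (Fin n →₀ ℕ) → MvPolynomial (Fin n) K := fun d => monomial d 1 with hM
  set I : Ideal (MvPolynomial (Fin n) K) := Ideal.span (M '' SI) with hI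
  set J : Ideal (MvPolynomial (Fin n) K) := Ideal.span (M '' SJ) with hJ
  set T : Set (Fin n →₀ ℕ) :=
    {d | ∃ (g : Fin r → (Fin n →₀ ℕ)) (h : Fin n →₀ ℕ),
      (∀ i, g i ∈ SI) ∧ h ∈ SJ ∧ d = ∑ i, (g i ⊔ h)} with hT
  have hTle : Ideal.span (M '' T) ≤ (I ⊓ J) ^ r := by
    rw [Ideal.span_le]
    rintro x ⟨d, ⟨g, h, hg, hh, rfl⟩, rfl⟩
    have hx : M (∑ i, (g i ⊔ h)) = ∏ i : Fin r, monomial (g i ⊔ h) (1 : K) :=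
      (prod_monomial_one _ _).symm
    rw [SetLike.mem_coe, hx]
    have hpow : (I ⊓ J) ^ r = ∏ _i : Fin r, (I ⊓ J) := by
      rw [Finset.prod_const, Finset.card_univ, Fintype.card_fin]
    rw [hpow]
    refine Ideal.prod_mem_prod fun i _ => ⟨?_, ?_⟩
    · rw [SetLike.mem_coe, hI, hM, mem_ideal_span_monomial_image]
      intro xi hxi
      rw [support_monomial, if_neg one_ne_zero, Finset.mem_singleton] at hxi
      exact ⟨g i, hg i, hxi ▸ le_sup_left⟩
    · rw [SetLike.mem_coe, hJ, hM, mem_ideal_span_monomial_image]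
      intro xi hxi
      rw [support_monomial, if_neg one_ne_zero, Finset.mem_singleton] at hxi
      exact ⟨h, hh, hxi ▸ le_sup_right⟩
  intro p hp
  obtain ⟨hp1, hp2⟩ := hp
  -- rewrite hp1 as a monomial-ideal membership
  have hIr : I ^ r ≤ Ideal.span (M ''
      {d | ∃ g : Fin r → (Fin n →₀ ℕ), (∀ i, g i ∈ SI) ∧ d = ∑ i, g i}) := by
    rw [hI, Ideal.span, Submodule.span_pow]
    apply Ideal.span_le.mpr
    intro x hx
    rw [Set.mem_pow] at hx
    obtain ⟨f, hf⟩ := hx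
    have hmem : ∀ i, (f i : MvPolynomial (Fin n) K) ∈ M '' SI := fun i => (f i).2
    choose e he heq using hmem
    have hx2 : x = M (∑ i, e i) := by
      rw [← hf, List.prod_ofFn,
        Finset.prod_congr rfl (fun i _ => (heq i).symm), prod_monomial_one]
    rw [hx2]
    exact Ideal.subset_span ⟨∑ i, e i, ⟨e, he, rfl⟩, rfl⟩
  have hp1' := mem_ideal_span_monomial_image.mp (by rw [← hM]; exact hIr hp1)
  have hp2' : p ∈ Ideal.span (M '' ((r • ·) '' SJ)) := by
    have himg : M '' ((r • ·) '' SJ) = (fun d => monomial (r • d) (1 : K)) '' SJ := by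
      rw [hM, Set.image_image]
    rw [himg]; exact hp2
  rw [hM, mem_ideal_span_monomial_image] at hp2'
  apply hTle
  rw [hM, mem_ideal_span_monomial_image]
  intro m hm
  obtain ⟨dI, ⟨g, hg, rfl⟩, hle1⟩ := hp1' m hm
  obtain ⟨dJ, ⟨h, hh, rfl⟩, hle2⟩ := hp2' m hm
  refine ⟨∑ i, (g i ⊔ h), ⟨g, h, hg, hh, rfl⟩, ?_⟩
  rw [← key g h (fun i j => hSI _ (hg i) j) (fun j => hSJ _ hh j)]
  exact sup_le hle1 hle2
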